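/- Consider a one-hidden-layer network with scalar output ŷ(x) = Σ_i h_i ρ(wᵢ·x) with ReLU-like activation ρ, trained by the empirical squared loss L, and consider gradient flow dP/dt = −∂L/∂P (with the convention ∂ρ(z)/∂z = α⁺ 1_{z>0} + α⁻ 1_{z<0}, and ∂ρ/∂z = α⁺ at z = 0, say). Then for each hidden neuron i, the quantity ‖wᵢ(t)‖² − hᵢ(t)² is constant along the gradient flow trajectory. -/

import Mathlib

open Matrix

/-- Along gradient flow of the empirical squared loss of a one-hidden-layer
scalar-output ReLU-like network (with the convention `ρ'(0) = α⁺`), the quantity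
`‖wᵢ‖² − hᵢ²` is conserved for each hidden neuron `i`. -/
theorem balancedness_conserved (αp αm : ℝ) (d : ℕ) {I K : Type*} [Fintype I] [Fintype K]
    (x : K → Fin d → ℝ) (y : K → ℝ)
    (ρ ρ' : ℝ → ℝ)
    (hρ : ∀ z, ρ z = if 0 ≤ z then αp * z else αm * z)
    (hρ' : ∀ z, ρ' z = if 0 ≤ z then αp else αm)
    (w : ℝ → I → Fin d → ℝ) (h : ℝ → I → ℝ) (e : ℝ → K → ℝ)
    (he : ∀ t k, e t k = (∑ i, h t i * ρ (w t i ⬝ᵥ x k)) - y k)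
    (hw : ∀ t i, HasDerivAt (fun s => w s i)
      (-(h t i • ∑ k, (e t k * ρ' (w t i ⬝ᵥ x k)) • x k)) t)
    (hh : ∀ t i, HasDerivAt (fun s => h s i)
      (-(∑ k, e t k * ρ (w t i ⬝ᵥ x k))) t) :
    ∀ i t, (∑ m, (w t i m) ^ 2) - (h t i) ^ 2 = (∑ m, (w 0 i m) ^ 2) - (h 0 i) ^ 2 := by
  intro i t
  have hwz : ∀ z : ℝ, ρ z = ρ' z * z := by
    intro z; rw [hρ, hρ']; split <;> ring
  have key : ∀ s : ℝ, HasDerivAt (fun u => (∑ m, (w u i m) ^ 2) - (h u i) ^ 2) 0 s := by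
    intro s
    set D : Fin d → ℝ := -(h s i • ∑ k, (e s k * ρ' (w s i ⬝ᵥ x k)) • x k) with hD
    have hcomp : ∀ m, HasDerivAt (fun u => w u i m) (D m) s :=
      hasDerivAt_pi.mp (hw s i)
    have h1 : HasDerivAt (fun u => ∑ m, (w u i m) ^ 2)
        (∑ m, (2 : ℕ) * w s i m ^ 1 * D m) s :=
      HasDerivAt.fun_sum fun m _ => (hcomp m).pow 2
    have h2 : HasDerivAt (fun u => (h u i) ^ 2)
        ((2 : ℕ) * h s i ^ 1 * (-(∑ k, e s k * ρ (w s i ⬝ᵥ x k)))) s :=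
      (hh s i).pow 2
    have hwD : w s i ⬝ᵥ D = -(h s i * ∑ k, e s k * ρ' (w s i ⬝ᵥ x k) * (w s i ⬝ᵥ x k)) := by
      rw [hD]
      rw [dotProduct_neg, dotProduct_smul, smul_eq_mul]
      congr 1
      congr 1
      simp only [dotProduct, Finset.sum_apply, Pi.smul_apply, smul_eq_mul,
        Finset.mul_sum]
      rw [Finset.sum_comm]
      refine Finset.sum_congr rfl fun k _ => ?_
      refine Finset.sum_congr rfl fun m _ => ?_
      ring
    have heq : (∑ m, (2 : ℕ) * w s i m ^ 1 * D m)
        - (2 : ℕ) * h s i ^ 1 * (-(∑ k, e s k * ρ (w s i ⬝ᵥ x k))) = 0 := by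
      have h3 : (∑ m, (2 : ℕ) * w s i m ^ 1 * D m) = 2 * (w s i ⬝ᵥ D) := by
        rw [dotProduct, Finset.mul_sum]
        refine Finset.sum_congr rfl fun m _ => ?_
        push_cast
        ring
      have h4 : (∑ k, e s k * ρ (w s i ⬝ᵥ x k))
          = ∑ k, e s k * ρ' (w s i ⬝ᵥ x k) * (w s i ⬝ᵥ x k) := by
        refine Finset.sum_congr rfl fun k _ => ?_
        rw [hwz]; ring
      rw [h3, hwD, h4]
      push_cast
      ring
    have := h1.sub h2
    rwa [heq] at this
  have hdiff : Differentiable ℝ (fun u => (∑ m, (w u i m) ^ 2) - (h u i) ^ 2) :=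
    fun s => (key s).differentiableAt
  exact is_const_of_deriv_eq_zero hdiff (fun s => (key s).deriv) t 0
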